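/- arXiv:2605.19573 — 3 statements merged into one kernel-verified Lean document; each statement's English description precedes it below -/
import Mathlib

section
/- Assume W(y|x) > 0 for all x,y and P_X(x) > 0 for all x. For every τ > τ*(R) := max(I(X;Y)−R, 0), E_MD(τ,R) = 0. Specifically, there exist joint pmfs Q with X-marginal P_X, λ(Q,R) < τ, and D(Q_{Y|X}‖W|P_X) arbitrarily small (e.g., convex combinations Q_ε = (1−ε)(P_X⊗W) + ε Q₀ approaching P_X⊗W, using continuity of λ and of the conditional divergence at P_X⊗W and λ(P_X⊗W,R) = τ*(R) < τ). -/
open scoped BigOperators ENNReal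
open Finset

noncomputable section

variable {X Y : Type*} [Fintype X] [Fintype Y]

/-- X-marginal of a joint distribution on `X × Y`. -/
def margX (Q : X → Y → ℝ) (x : X) : ℝ := ∑ y, Q x y

/-- Y-marginal of a joint distribution on `X × Y`. -/
def margY (Q : X → Y → ℝ) (y : Y) : ℝ := ∑ x, Q x y

/-- Output marginal `P_Y` induced by input distribution `PX` and channel `W`. -/
def outP (PX : X → ℝ) (W : X → Y → ℝ) (y : Y) : ℝ := ∑ x, PX x * W x y

/-- `Q` is a joint pmf on `X × Y`. -/
def IsJointPmf (Q : X → Y → ℝ) : Prop := (∀ x y, 0 ≤ Q x y) ∧ ∑ x, ∑ y, Q x y = 1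

/-- `p` is a pmf. -/
def IsPmf {Z : Type*} [Fintype Z] (p : Z → ℝ) : Prop := (∀ z, 0 ≤ p z) ∧ ∑ z, p z = 1

/-- `W` is a channel: each row `W x ·` is a pmf on `Y`. -/
def IsChannel (W : X → Y → ℝ) : Prop := ∀ x, (∀ y, 0 ≤ W x y) ∧ ∑ y, W x y = 1

/-- Marginal KL divergence `D_m(Q_Y) = D(Q_Y ‖ P_Y)`. -/
def Dm (PX : X → ℝ) (W : X → Y → ℝ) (Q : X → Y → ℝ) : ℝ :=
  ∑ y, margY Q y * Real.log (margY Q y / outP PX W y)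

/-- Conditional KL divergence `D_c(Q) = D(Q_{Y|X} ‖ W | P_X) = D(Q ‖ P_X ⊗ W)`
(for `Q` with X-marginal `P_X`). -/
def Dc (PX : X → ℝ) (W : X → Y → ℝ) (Q : X → Y → ℝ) : ℝ :=
  ∑ x, ∑ y, Q x y * Real.log (Q x y / (PX x * W x y))

/-- Mutual information `I_Q(X;Y)` of the joint distribution `Q`. -/
def MI (Q : X → Y → ℝ) : ℝ :=
  ∑ x, ∑ y, Q x y * Real.log (Q x y / (margX Q x * margY Q y))

/-- `λ(Q,R) = D_m(Q_Y) − D_c(Q) + [I_Q(X;Y) − R]₊`. -/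
def lam (PX : X → ℝ) (W : X → Y → ℝ) (R : ℝ) (Q : X → Y → ℝ) : ℝ :=
  Dm PX W Q - Dc PX W Q + max (MI Q - R) 0

/-- False-alarm exponent `E_FA(τ,R)`: infimum (in extended reals, `⊤` on the empty set)
of `D_m(Q_Y) + [I_Q(X;Y) − R]₊` over joint pmfs `Q` with X-marginal `P_X` and `λ(Q,R) ≥ τ`. -/
def EFA (PX : X → ℝ) (W : X → Y → ℝ) (R τ : ℝ) : ℝ≥0∞ :=
  ⨅ Q ∈ {Q : X → Y → ℝ | IsJointPmf Q ∧ margX Q = PX ∧ τ ≤ lam PX W R Q},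
    ENNReal.ofReal (Dm PX W Q + max (MI Q - R) 0)

/-- Missed-detection exponent `E_MD(τ,R)`: infimum (in extended reals, `⊤` on the empty set)
of `D_c(Q)` over joint pmfs `Q` with X-marginal `P_X` and `λ(Q,R) < τ`. -/
def EMD (PX : X → ℝ) (W : X → Y → ℝ) (R τ : ℝ) : ℝ≥0∞ :=
  ⨅ Q ∈ {Q : X → Y → ℝ | IsJointPmf Q ∧ margX Q = PX ∧ lam PX W R Q < τ},
    ENNReal.ofReal (Dc PX W Q)

/-- for every `τ > τ*(R) = [I(X;Y) − R]₊`, `E_MD(τ,R) = 0`. -/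
theorem EMD_zero_above_tau_star
    (PX : X → ℝ) (W : X → Y → ℝ)
    (hPX : IsPmf PX) (hPXpos : ∀ x, 0 < PX x)
    (hW : IsChannel W) (hWpos : ∀ x y, 0 < W x y)
    (R : ℝ) (hR : 0 ≤ R) :
    ∀ τ : ℝ, max (MI (fun x y => PX x * W x y) - R) 0 < τ →
      EMD PX W R τ = 0 := by
  intro τ hτ
  set Q : X → Y → ℝ := fun x y => PX x * W x y with hQ
  have hQpmf : IsJointPmf Q := by
    refine ⟨fun x y => mul_nonneg (hPX.1 x) ((hW x).1 y), ?_⟩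
    have : ∀ x : X, ∑ y, Q x y = PX x := by
      intro x
      simp [hQ, ← Finset.mul_sum, (hW x).2]
    simp [this, hPX.2]
  have hmargX : margX Q = PX := by
    funext x
    simp [margX, hQ, ← Finset.mul_sum, (hW x).2]
  have hterm : ∀ a : ℝ, a * Real.log (a / a) = 0 := by
    intro a
    rcases eq_or_ne a 0 with h | h
    · simp [h]
    · rw [div_self h, Real.log_one, mul_zero]
  have hDm : Dm PX W Q = 0 := by
    apply Finset.sum_eq_zero
    intro y _
    have : margY Q y = outP PX W y := rfl
    rw [this]
    exact hterm _
  have hDc : Dc PX W Q = 0 := by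
    apply Finset.sum_eq_zero
    intro x _
    apply Finset.sum_eq_zero
    intro y _
    exact hterm _
  have hlam : lam PX W R Q < τ := by
    have : lam PX W R Q = max (MI Q - R) 0 := by
      simp [lam, hDm, hDc]
    rw [this]
    exact hτ
  have hmem : Q ∈ {Q : X → Y → ℝ | IsJointPmf Q ∧ margX Q = PX ∧ lam PX W R Q < τ} :=
    ⟨hQpmf, hmargX, hlam⟩
  refine le_antisymm ?_ zero_le
  calc EMD PX W R τ ≤ ENNReal.ofReal (Dc PX W Q) := biInf_le _ hmem
    _ = 0 := by simp [hDc]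
end
end

section
/- Assume W(y|x) > 0 for all x,y and P_X(x) > 0 for all x. For every τ < τ*(R) := max(I(X;Y)−R, 0), E_MD(τ,R) > 0; i.e., inf{ D(Q_{Y|X}‖W|P_X) : Q_X = P_X, λ(Q,R) < τ } is strictly positive. (Proof idea: the only Q with conditional divergence zero is P_X⊗W, which has λ = τ*(R) > τ; by continuity and compactness, all Q with λ(Q,R) < τ are bounded away from P_X⊗W in conditional divergence.) -/
open scoped BigOperators ENNReal
open Finset

noncomputable section

variable {X Y : Type*} [Fintype X] [Fintype Y]

set_option linter.unusedSectionVars false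
namespace EMDAux

lemma mul_log_div_eq (c t : ℝ) (hc : c ≠ 0) :
    t * Real.log (t / c) = t * Real.log t - t * Real.log c := by
  rcases eq_or_ne t 0 with h | h
  · simp [h]
  · rw [Real.log_div h hc]; ring

lemma continuous_mul_log_div (c : ℝ) (hc : c ≠ 0) :
    Continuous fun t : ℝ => t * Real.log (t / c) := by
  have h : (fun t : ℝ => t * Real.log (t / c)) =
      fun t => t * Real.log t - t * Real.log c :=
    funext fun t => mul_log_div_eq c t hc
  rw [h]
  exact Real.continuous_mul_log.sub (continuous_id.mul continuous_const)

/-- continuous surrogate for mutual information. -/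
def MIc (Q : X → Y → ℝ) : ℝ :=
  (∑ x, ∑ y, Q x y * Real.log (Q x y))
    - ∑ x, margX Q x * Real.log (margX Q x)
    - ∑ y, margY Q y * Real.log (margY Q y)

lemma MIc_eq (Q : X → Y → ℝ) (hQ : ∀ x y, 0 ≤ Q x y) : MI Q = MIc Q := by
  have hterm : ∀ x y, Q x y * Real.log (Q x y / (margX Q x * margY Q y)) =
      Q x y * Real.log (Q x y) - Q x y * Real.log (margX Q x)
        - Q x y * Real.log (margY Q y) := by
    intro x y
    rcases (hQ x y).eq_or_lt with h | h
    · simp [← h]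
    · have ha : 0 < margX Q x :=
        lt_of_lt_of_le h (Finset.single_le_sum (fun i _ => hQ x i) (Finset.mem_univ y))
      have hb : 0 < margY Q y :=
        lt_of_lt_of_le h (Finset.single_le_sum (fun i _ => hQ i y) (Finset.mem_univ x))
      rw [Real.log_div h.ne' (by positivity), Real.log_mul ha.ne' hb.ne']
      ring
  have key : ∀ x, ∑ y, (Q x y * Real.log (Q x y) - Q x y * Real.log (margX Q x)
      - Q x y * Real.log (margY Q y))
      = (∑ y, Q x y * Real.log (Q x y)) - margX Q x * Real.log (margX Q x)
        - ∑ y, Q x y * Real.log (margY Q y) := by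
    intro x
    rw [Finset.sum_sub_distrib, Finset.sum_sub_distrib, ← Finset.sum_mul]
    rfl
  unfold MI MIc
  simp_rw [hterm, key]
  rw [Finset.sum_sub_distrib, Finset.sum_sub_distrib]
  congr 1
  rw [Finset.sum_comm]
  refine Finset.sum_congr rfl fun y _ => ?_
  rw [← Finset.sum_mul]
  rfl

def lamc (PX : X → ℝ) (W : X → Y → ℝ) (R : ℝ) (Q : X → Y → ℝ) : ℝ :=
  Dm PX W Q - Dc PX W Q + max (MIc Q - R) 0

lemma lamc_eq (PX : X → ℝ) (W : X → Y → ℝ) (R : ℝ) (Q : X → Y → ℝ)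
    (hQ : ∀ x y, 0 ≤ Q x y) : lam PX W R Q = lamc PX W R Q := by
  unfold lam lamc; rw [MIc_eq Q hQ]

lemma continuous_eval (x : X) (y : Y) :
    Continuous fun Q : X → Y → ℝ => Q x y :=
  (continuous_apply y).comp (continuous_apply x)

lemma continuous_margX (x : X) : Continuous fun Q : X → Y → ℝ => margX Q x := by
  unfold margX; exact continuous_finset_sum _ fun y _ => continuous_eval x y

lemma continuous_margY (y : Y) : Continuous fun Q : X → Y → ℝ => margY Q y := by
  unfold margY; exact continuous_finset_sum _ fun x _ => continuous_eval x y

lemma continuous_Dc (PX : X → ℝ) (W : X → Y → ℝ)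
    (hpos : ∀ x y, 0 < PX x * W x y) : Continuous (Dc PX W) := by
  unfold Dc
  refine continuous_finset_sum _ fun x _ => continuous_finset_sum _ fun y _ => ?_
  exact (continuous_mul_log_div _ (hpos x y).ne').comp (continuous_eval x y)

lemma continuous_Dm (PX : X → ℝ) (W : X → Y → ℝ)
    (hpos : ∀ y, 0 < outP PX W y) : Continuous (Dm PX W) := by
  unfold Dm
  refine continuous_finset_sum _ fun y _ => ?_
  exact (continuous_mul_log_div _ (hpos y).ne').comp (continuous_margY y)

lemma continuous_MIc : Continuous (MIc : (X → Y → ℝ) → ℝ) := by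
  unfold MIc
  refine ((continuous_finset_sum _ fun x _ => continuous_finset_sum _ fun y _ =>
      Real.continuous_mul_log.comp (continuous_eval x y)).sub
    (continuous_finset_sum _ fun x _ =>
      Real.continuous_mul_log.comp (continuous_margX x))).sub
    (continuous_finset_sum _ fun y _ =>
      Real.continuous_mul_log.comp (continuous_margY y))

lemma continuous_lamc (PX : X → ℝ) (W : X → Y → ℝ) (R : ℝ)
    (hpos : ∀ x y, 0 < PX x * W x y) (hout : ∀ y, 0 < outP PX W y) :
    Continuous (lamc PX W R) := by
  unfold lamc
  exact ((continuous_Dm PX W hout).sub (continuous_Dc PX W hpos)).add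
    ((continuous_MIc.sub continuous_const).max continuous_const)

lemma gibbs_term (a b : ℝ) (ha : 0 ≤ a) (hb : 0 < b) :
    0 ≤ a * Real.log (a / b) - a + b ∧
      (a * Real.log (a / b) - a + b = 0 → a = b) := by
  rcases ha.eq_or_lt with h | h
  · refine ⟨by simp [← h]; linarith, fun h0 => ?_⟩
    exfalso; rw [← h] at h0; simp at h0; linarith
  · have hld : Real.log (b / a) = - Real.log (a / b) := by
      rw [Real.log_div hb.ne' h.ne', Real.log_div h.ne' hb.ne']; ring
    have hba : a * (b / a - 1) = b - a := by field_simp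
    constructor
    · have hlog : Real.log (b / a) ≤ b / a - 1 :=
        Real.log_le_sub_one_of_pos (div_pos hb h)
      rw [hld] at hlog
      have := mul_le_mul_of_nonneg_left hlog (le_of_lt h)
      nlinarith
    · intro h0
      by_contra hne
      have hx : b / a ≠ 1 := by
        intro h1
        rw [div_eq_one_iff_eq h.ne'] at h1
        exact hne h1.symm
      have hstrict : Real.log (b / a) < b / a - 1 :=
        Real.log_lt_sub_one_of_pos (div_pos hb h) hx
      rw [hld] at hstrict
      have := mul_lt_mul_of_pos_left hstrict h
      nlinarith

lemma gibbs {Z : Type*} [Fintype Z] (p q : Z → ℝ)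
    (hp : ∀ z, 0 ≤ p z) (hps : ∑ z, p z = 1)
    (hq : ∀ z, 0 < q z) (hqs : ∑ z, q z = 1) :
    0 ≤ ∑ z, p z * Real.log (p z / q z) ∧
      ((∑ z, p z * Real.log (p z / q z)) = 0 → p = q) := by
  have hterm : ∀ z ∈ Finset.univ, (0:ℝ) ≤ p z * Real.log (p z / q z) - p z + q z :=
    fun z _ => (gibbs_term _ _ (hp z) (hq z)).1
  have hsum : ∑ z, (p z * Real.log (p z / q z) - p z + q z)
      = ∑ z, p z * Real.log (p z / q z) := by
    rw [Finset.sum_add_distrib, Finset.sum_sub_distrib, hps, hqs]; ring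
  constructor
  · have h := Finset.sum_nonneg hterm
    rw [hsum] at h; exact h
  · intro h0
    have hz := (Finset.sum_eq_zero_iff_of_nonneg hterm).1 (by rw [hsum, h0])
    funext z
    exact (gibbs_term _ _ (hp z) (hq z)).2 (hz z (Finset.mem_univ z))


end EMDAux

/-- for every `τ < τ*(R) = [I(X;Y) − R]₊`, `E_MD(τ,R) > 0`. -/
theorem EMD_pos_below_tau_star
    (PX : X → ℝ) (W : X → Y → ℝ)
    (hPX : IsPmf PX) (hPXpos : ∀ x, 0 < PX x)
    (hW : IsChannel W) (hWpos : ∀ x y, 0 < W x y)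
    (R : ℝ) (hR : 0 ≤ R) :
    ∀ τ : ℝ, τ < max (MI (fun x y => PX x * W x y) - R) 0 →
      0 < EMD PX W R τ := by
  classical
  intro τ hτ
  have hXne : Nonempty X := by
    by_contra h
    rw [not_nonempty_iff] at h
    have h2 := hPX.2
    rw [Finset.univ_eq_empty, Finset.sum_empty] at h2
    norm_num at h2
  have hpos : ∀ x y, 0 < PX x * W x y := fun x y => mul_pos (hPXpos x) (hWpos x y)
  have hout : ∀ y, 0 < outP PX W y := fun y =>
    Finset.sum_pos (fun x _ => hpos x y) Finset.univ_nonempty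
  set P2 : X → Y → ℝ := fun x y => PX x * W x y with hP2def
  have hP2row : ∀ x, ∑ y, P2 x y = PX x := by
    intro x
    simp only [hP2def]
    rw [← Finset.mul_sum, (hW x).2, mul_one]
  have hP2pmf : IsJointPmf P2 := by
    refine ⟨fun x y => (hpos x y).le, ?_⟩
    calc ∑ x, ∑ y, P2 x y = ∑ x, PX x := Finset.sum_congr rfl fun x _ => hP2row x
      _ = 1 := hPX.2
  have hP2marg : margX P2 = PX := funext fun x => hP2row x
  have hP2margY : ∀ y, margY P2 y = outP PX W y := by
    intro y
    simp only [margY, outP, hP2def]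
  have hDm0 : Dm PX W P2 = 0 := by
    unfold Dm
    refine Finset.sum_eq_zero fun y _ => ?_
    rw [hP2margY y, div_self (hout y).ne', Real.log_one, mul_zero]
  have hDc0 : Dc PX W P2 = 0 := by
    unfold Dc
    refine Finset.sum_eq_zero fun x _ => Finset.sum_eq_zero fun y _ => ?_
    have h1 : P2 x y / (PX x * W x y) = 1 := by
      simp only [hP2def]
      exact div_self (hpos x y).ne'
    rw [h1, Real.log_one, mul_zero]
  have hτ' : τ < lam PX W R P2 := by
    unfold lam
    rw [hDm0, hDc0]
    simpa using hτ
  have hcDc : Continuous (Dc PX W) := EMDAux.continuous_Dc PX W hpos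
  have hclam : Continuous (EMDAux.lamc PX W R) := EMDAux.continuous_lamc PX W R hpos hout
  set A : Set (X → Y → ℝ) := {Q | IsJointPmf Q ∧ margX Q = PX} with hAdef
  have hA_closed : IsClosed A := by
    have e : A = ({Q : X → Y → ℝ | ∀ x y, 0 ≤ Q x y} ∩
        ({Q | ∑ x, ∑ y, Q x y = 1} ∩ {Q | margX Q = PX})) := by
      ext Q
      simp only [hAdef, Set.mem_setOf_eq, Set.mem_inter_iff, IsJointPmf]
      tauto
    rw [e]
    refine IsClosed.inter ?_ (IsClosed.inter ?_ ?_)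
    · have e2 : {Q : X → Y → ℝ | ∀ x y, 0 ≤ Q x y} = ⋂ x, ⋂ y, {Q | 0 ≤ Q x y} := by
        ext Q; simp
      rw [e2]
      exact isClosed_iInter fun x => isClosed_iInter fun y =>
        isClosed_le continuous_const (EMDAux.continuous_eval x y)
    · exact isClosed_eq (continuous_finset_sum _ fun x _ =>
        continuous_finset_sum _ fun y _ => EMDAux.continuous_eval x y) continuous_const
    · have e3 : {Q : X → Y → ℝ | margX Q = PX} = ⋂ x, {Q | margX Q x = PX x} := by
        ext Q; simp [funext_iff]
      rw [e3]
      exact isClosed_iInter fun x =>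
        isClosed_eq (EMDAux.continuous_margX x) continuous_const
  have hbox : IsCompact (Set.pi Set.univ fun _ : X =>
      Set.pi Set.univ fun _ : Y => Set.Icc (0:ℝ) 1) :=
    isCompact_univ_pi fun _ => isCompact_univ_pi fun _ => isCompact_Icc
  have hsub : A ⊆ Set.pi Set.univ fun _ : X =>
      Set.pi Set.univ fun _ : Y => Set.Icc (0:ℝ) 1 := by
    intro Q hQ
    rw [Set.mem_univ_pi]
    intro x
    rw [Set.mem_univ_pi]
    intro y
    refine ⟨hQ.1.1 x y, ?_⟩
    have h1 : Q x y ≤ ∑ y', Q x y' :=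
      Finset.single_le_sum (fun i _ => hQ.1.1 x i) (Finset.mem_univ y)
    have h2 : (∑ y', Q x y') ≤ ∑ x', ∑ y', Q x' y' :=
      Finset.single_le_sum
        (fun i (_ : i ∈ Finset.univ) => Finset.sum_nonneg fun j _ => hQ.1.1 i j)
        (Finset.mem_univ x)
    have h3 := hQ.1.2
    linarith
  have hAcomp : IsCompact A := hbox.of_isClosed_subset hA_closed hsub
  set C : Set (X → Y → ℝ) := A ∩ EMDAux.lamc PX W R ⁻¹' Set.Iic τ with hCdef
  have hCcomp : IsCompact C := hAcomp.inter_right (isClosed_Iic.preimage hclam)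
  have hSsub : ∀ Q : X → Y → ℝ,
      IsJointPmf Q ∧ margX Q = PX ∧ lam PX W R Q < τ → Q ∈ C := by
    intro Q hQ
    refine ⟨⟨hQ.1, hQ.2.1⟩, ?_⟩
    simp only [Set.mem_preimage, Set.mem_Iic]
    rw [← EMDAux.lamc_eq PX W R Q hQ.1.1]
    exact hQ.2.2.le
  have hgibbs : ∀ Q : X → Y → ℝ, IsJointPmf Q →
      0 ≤ Dc PX W Q ∧ (Dc PX W Q = 0 → Q = P2) := by
    intro Q hQ
    have hDceq : Dc PX W Q =
        ∑ z : X × Y, Q z.1 z.2 * Real.log (Q z.1 z.2 / (PX z.1 * W z.1 z.2)) := by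
      rw [Fintype.sum_prod_type]
      rfl
    have h := EMDAux.gibbs (fun z : X × Y => Q z.1 z.2)
      (fun z : X × Y => PX z.1 * W z.1 z.2)
      (fun z => hQ.1 z.1 z.2)
      (by rw [Fintype.sum_prod_type]; exact hQ.2)
      (fun z => hpos z.1 z.2)
      (by rw [Fintype.sum_prod_type]; exact hP2pmf.2)
    constructor
    · rw [hDceq]; exact h.1
    · intro h0
      have hpq := h.2 (by rw [← hDceq]; exact h0)
      funext x y
      have := congrFun hpq (x, y)
      simpa [hP2def] using this
  by_cases hCne : C.Nonempty
  · obtain ⟨Q₀, hQ₀C, hminOn⟩ := hCcomp.exists_isMinOn hCne hcDc.continuousOn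
    have hmin : ∀ Q ∈ C, Dc PX W Q₀ ≤ Dc PX W Q := fun Q hQ => isMinOn_iff.mp hminOn Q hQ
    have hDcpos : 0 < Dc PX W Q₀ := by
      rcases (hgibbs Q₀ hQ₀C.1.1).1.eq_or_lt with h | h
      · exfalso
        have hQ0P2 : Q₀ = P2 := (hgibbs Q₀ hQ₀C.1.1).2 h.symm
        have h1 : EMDAux.lamc PX W R Q₀ ≤ τ := hQ₀C.2
        rw [hQ0P2, ← EMDAux.lamc_eq PX W R P2 hP2pmf.1] at h1
        linarith
      · exact h
    refine lt_of_lt_of_le (ENNReal.ofReal_pos.mpr hDcpos) ?_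
    unfold EMD
    refine le_iInf₂ fun Q hQ => ?_
    exact ENNReal.ofReal_le_ofReal (hmin Q (hSsub Q hQ))
  · refine lt_of_lt_of_le (by norm_num : (0:ℝ≥0∞) < 1) ?_
    unfold EMD
    exact le_iInf₂ fun Q hQ => (hCne ⟨Q, hSsub Q hQ⟩).elim
end
end

section
/- For every τ > 0 and every R ≥ 0, E_FA(τ,R) > 0. Equivalently: there is no joint pmf Q with X-marginal P_X, λ(Q,R) ≥ τ > 0, and D(Q_Y‖P_Y) + max(I_Q(X;Y)−R,0) = 0, and moreover the infimum over the feasible (compact) set is strictly positive whenever nonempty. (Proof idea: zero objective forces Q_Y = P_Y and I_Q(X;Y) ≤ R, whence λ(Q,R) = −D(Q_{Y|X}‖W|P_X) ≤ 0 < τ; conclude by compactness and continuity.) -/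
open scoped BigOperators ENNReal
open Finset

noncomputable section

variable {X Y : Type*} [Fintype X] [Fintype Y]

/-- Pointwise Gibbs bound: `q - p ≤ q * log (q / p)` for `q ≥ 0`, `p > 0`. -/
lemma pointwise_gibbs {q p : ℝ} (hq : 0 ≤ q) (hp : 0 < p) :
    q - p ≤ q * Real.log (q / p) := by
  rcases eq_or_lt_of_le hq with h | h
  · simp [← h, hp.le]
  · have hlog : Real.log (p / q) ≤ p / q - 1 :=
      Real.log_le_sub_one_of_pos (div_pos hp h)
    have hinv : Real.log (q / p) = - Real.log (p / q) := by
      rw [← Real.log_inv]; congr 1; field_simp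
    have h1 : 1 - p / q ≤ Real.log (q / p) := by rw [hinv]; linarith
    calc q - p = q * (1 - p / q) := by field_simp
    _ ≤ q * Real.log (q / p) := by
        exact mul_le_mul_of_nonneg_left h1 hq

/-- `D_c ≥ 0` (Gibbs' inequality). -/
lemma Dc_nonneg (PX : X → ℝ) (W : X → Y → ℝ) (Q : X → Y → ℝ)
    (hQ : IsJointPmf Q) (hPX : IsPmf PX) (hPXpos : ∀ x, 0 < PX x)
    (hW : IsChannel W) (hWpos : ∀ x y, 0 < W x y) :
    0 ≤ Dc PX W Q := by
  have hsumP : ∑ x, ∑ y, PX x * W x y = 1 := by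
    have : ∀ x, ∑ y, PX x * W x y = PX x := by
      intro x
      rw [← Finset.mul_sum, (hW x).2, mul_one]
    simp_rw [this]; exact hPX.2
  have key : ∀ x y, Q x y - PX x * W x y ≤ Q x y * Real.log (Q x y / (PX x * W x y)) := by
    intro x y
    exact pointwise_gibbs (hQ.1 x y) (mul_pos (hPXpos x) (hWpos x y))
  have : ∑ x, ∑ y, (Q x y - PX x * W x y) ≤ Dc PX W Q := by
    apply Finset.sum_le_sum
    intro x _
    exact Finset.sum_le_sum fun y _ => key x y
  have hsub : ∑ x, ∑ y, (Q x y - PX x * W x y) = 0 := by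
    simp_rw [Finset.sum_sub_distrib]
    rw [hQ.2, hsumP]; ring
  linarith

/-- for every `τ > 0` and every `R ≥ 0`, `E_FA(τ,R) > 0`. -/
theorem EFA_pos_of_tau_pos
    (PX : X → ℝ) (W : X → Y → ℝ)
    (hPX : IsPmf PX) (hPXpos : ∀ x, 0 < PX x)
    (hW : IsChannel W) (hWpos : ∀ x y, 0 < W x y)
    (R : ℝ) (hR : 0 ≤ R) :
    ∀ τ : ℝ, 0 < τ → 0 < EFA PX W R τ := by
  intro τ hτ
  have hlb : ENNReal.ofReal τ ≤ EFA PX W R τ := by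
    refine le_iInf₂ fun Q hQ => ?_
    obtain ⟨hjoint, hmarg, hlam⟩ := hQ
    have hDc := Dc_nonneg PX W Q hjoint hPX hPXpos hW hWpos
    apply ENNReal.ofReal_le_ofReal
    have : lam PX W R Q = Dm PX W Q - Dc PX W Q + max (MI Q - R) 0 := rfl
    linarith [hlam, this ▸ hlam]
  calc (0 : ℝ≥0∞) < ENNReal.ofReal τ := ENNReal.ofReal_pos.mpr hτ
  _ ≤ EFA PX W R τ := hlb
end
end
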